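/- Let G be the weighted directed graph on vertices {0,1,...,n} associated to an n×n matrix A with canon A+ℓ whose diagonal entries form a maximal transversal sum: the edge (i,j) for i,j ∈ [1,n] has weight w_{i,j} := a_{i,i}+ℓ_i − a_{j,i} − ℓ_j ≥ 0, and the edge (i,0) has weight w_{i,0} := ℓ_i. Then a vector λ is the minimal canon of A if and only if for every vertex i ∈ [1,n], the length of a shortest path from i to 0 in G equals ℓ_i − λ_i. -/

import Mathlib

/-- The tropical determinant of an `n × n` matrix over a totally ordered
commutative group. -/
def tropDet {n : ℕ} {M : Type*} [AddCommGroup M] [LinearOrder M] [IsOrderedAddMonoid M]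
    (A : Fin n → Fin n → M) : M :=
  Finset.univ.sup' ⟨1, Finset.mem_univ 1⟩
    fun σ : Equiv.Perm (Fin n) => ∑ i, A i (σ i)

/-- `ℓ` is a canon for `A` with respect to the diagonal transversal family. -/
def DiagCanon {n : ℕ} {M : Type*} [AddCommGroup M] [LinearOrder M] [IsOrderedAddMonoid M]
    (A : Fin n → Fin n → M) (ℓ : Fin n → M) : Prop :=
  (∀ i, 0 ≤ ℓ i) ∧ ∀ i i', A i' i + ℓ i' ≤ A i i + ℓ i

/-- Cost of a directed path in the graph on `{0, 1, …, n}` associated to the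
canon `A + ℓ`: from vertex `i`, following the list of intermediate vertices and
finally taking the edge to vertex `0`.  The edge `(i, j)` has weight
`a_{i,i} + ℓ_i − a_{j,i} − ℓ_j`, and the edge `(i, 0)` has weight `ℓ_i`. -/
def pathCost {n : ℕ} {M : Type*} [AddCommGroup M] [LinearOrder M] [IsOrderedAddMonoid M]
    (A : Fin n → Fin n → M) (ℓ : Fin n → M) : Fin n → List (Fin n) → M
  | i, [] => ℓ i
  | i, j :: r => (A i i + ℓ i - (A j i + ℓ j)) + pathCost A ℓ j r

section Aux
variable {n : ℕ} {M : Type*} [AddCommGroup M] [LinearOrder M] [IsOrderedAddMonoid M]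
variable (A : Fin n → Fin n → M) (ℓ : Fin n → M)

lemma pathCost_nil (i : Fin n) : pathCost A ℓ i [] = ℓ i := rfl

lemma pathCost_cons (i j : Fin n) (r : List (Fin n)) :
    pathCost A ℓ i (j :: r) = (A i i + ℓ i - (A j i + ℓ j)) + pathCost A ℓ j r := rfl

lemma weight_nonneg (hc : DiagCanon A ℓ) (i j : Fin n) : 0 ≤ A i i + ℓ i - (A j i + ℓ j) :=
  sub_nonneg.2 (hc.2 i j)

lemma pathCost_le_append (hc : DiagCanon A ℓ) (u : List (Fin n)) (i k : Fin n) (t : List (Fin n)) :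
    pathCost A ℓ k t ≤ pathCost A ℓ i (u ++ k :: t) := by
  induction u generalizing i with
  | nil =>
    rw [List.nil_append, pathCost_cons]
    exact le_add_of_nonneg_left (weight_nonneg A ℓ hc i k)
  | cons j u' ih =>
    rw [List.cons_append, pathCost_cons]
    exact (ih j).trans (le_add_of_nonneg_left (weight_nonneg A ℓ hc i j))

lemma exists_simple (hc : DiagCanon A ℓ) : ∀ m (p : List (Fin n)), p.length ≤ m → ∀ i : Fin n,
    ∃ q : List (Fin n), q.Nodup ∧ i ∉ q ∧ pathCost A ℓ i q ≤ pathCost A ℓ i p := by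
  intro m
  induction m with
  | zero =>
    intro p hp i
    have : p = [] := List.length_eq_zero_iff.mp (Nat.le_zero.mp hp)
    subst this
    exact ⟨[], List.nodup_nil, List.not_mem_nil (a := i), le_refl _⟩
  | succ m ih =>
    intro p hp i
    by_cases hi : i ∈ p
    · obtain ⟨u, t, rfl⟩ := List.append_of_mem hi
      have ht : t.length ≤ m := by
        simp only [List.length_append, List.length_cons] at hp; omega
      obtain ⟨q, h1, h2, h3⟩ := ih t ht i
      exact ⟨q, h1, h2, h3.trans (pathCost_le_append A ℓ hc u i i t)⟩
    · cases p with
      | nil => exact ⟨[], List.nodup_nil, List.not_mem_nil (a := i), le_refl _⟩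
      | cons j r =>
        obtain ⟨q, h1, h2, h3⟩ := ih r (by simpa using hp) j
        by_cases hiq : i ∈ q
        · obtain ⟨u, t, rfl⟩ := List.append_of_mem hiq
          have hit : (i :: t).Nodup := h1.of_append_right
          refine ⟨t, (List.nodup_cons.mp hit).2, (List.nodup_cons.mp hit).1, ?_⟩
          calc pathCost A ℓ i t ≤ pathCost A ℓ i ((j :: u) ++ i :: t) :=
                pathCost_le_append A ℓ hc (j :: u) i i t
            _ = (A i i + ℓ i - (A j i + ℓ j)) + pathCost A ℓ j (u ++ i :: t) := rfl
            _ ≤ (A i i + ℓ i - (A j i + ℓ j)) + pathCost A ℓ j r := add_le_add_right h3 _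
            _ = pathCost A ℓ i (j :: r) := rfl
        · have hij : i ≠ j := fun h => hi (h ▸ List.mem_cons_self (a := j) (l := r))
          refine ⟨j :: q, List.nodup_cons.2 ⟨h2, h1⟩, ?_, ?_⟩
          · simp only [List.mem_cons, not_or]; exact ⟨hij, hiq⟩
          · rw [pathCost_cons, pathCost_cons]
            exact add_le_add_right h3 _

lemma exists_least (hc : DiagCanon A ℓ) (i : Fin n) : ∃ d, IsLeast (Set.range (pathCost A ℓ i)) d := by
  have hfin : ({q : List (Fin n) | q.Nodup ∧ i ∉ q} : Set _).Finite := by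
    apply (List.finite_length_le (Fin n) n).subset
    intro q hq
    simpa using hq.1.length_le_card
  obtain ⟨q₀, hq₀, hmin⟩ := Set.exists_min_image _ (pathCost A ℓ i) hfin
    ⟨[], List.nodup_nil, List.not_mem_nil (a := i)⟩
  refine ⟨pathCost A ℓ i q₀, ⟨q₀, rfl⟩, ?_⟩
  rintro x ⟨p, rfl⟩
  obtain ⟨q, h1, h2, h3⟩ := exists_simple A ℓ hc p.length p le_rfl i
  exact (hmin q ⟨h1, h2⟩).trans h3

lemma canon_lb {m : Fin n → M} (hm : DiagCanon A m) :
    ∀ (p : List (Fin n)) (i : Fin n), ℓ i - m i ≤ pathCost A ℓ i p := by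
  intro p
  induction p with
  | nil => intro i; exact sub_le_self _ (hm.1 i)
  | cons j r ih =>
    intro i
    rw [pathCost_cons, ← sub_nonneg]
    have h1 : 0 ≤ pathCost A ℓ j r - (ℓ j - m j) := sub_nonneg.2 (ih j)
    have h2 : 0 ≤ A i i + m i - (A j i + m j) := sub_nonneg.2 (hm.2 i j)
    have := add_nonneg h2 h1
    convert this using 1
    abel

end Aux

/-- Shortest-path characterization of the minimal canon: assuming the diagonal
of `A` is a maximal transversal sum and `ℓ` is a canon of `A`, a vector `λ`
is the minimal canon of `A` iff for every vertex `i` the shortest path from `i`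
to `0` in the associated weighted graph exists and has length `ℓ_i − λ_i`. -/
theorem minimal_canon_iff_shortest_path {n : ℕ} {M : Type*}
    [AddCommGroup M] [LinearOrder M] [IsOrderedAddMonoid M] (A : Fin n → Fin n → M) (ℓ lam : Fin n → M)
    (hdiag : ∑ i, A i i = tropDet A) (hc : DiagCanon A ℓ) :
    (DiagCanon A lam ∧ ∀ m, DiagCanon A m → lam ≤ m) ↔
      ∀ i, IsLeast (Set.range (pathCost A ℓ i)) (ℓ i - lam i) := by
  have hleast : ∀ i, ∃ d, IsLeast (Set.range (pathCost A ℓ i)) d := exists_least A ℓ hc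
  choose d hd using hleast
  have hμcanon : DiagCanon A (fun i => ℓ i - d i) := by
    constructor
    · intro i
      exact sub_nonneg.2 ((hd i).2 ⟨[], rfl⟩)
    · intro i i'
      obtain ⟨q, hq⟩ := (hd i').1
      have hmem : (A i i + ℓ i - (A i' i + ℓ i')) + d i' ∈ Set.range (pathCost A ℓ i) :=
        ⟨i' :: q, by rw [pathCost_cons, hq]⟩
      have h := (hd i).2 hmem
      rw [← sub_nonneg] at h ⊢
      convert h using 1
      beta_reduce
      abel
  have hμmin : ∀ m, DiagCanon A m → (fun i => ℓ i - d i) ≤ m := by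
    intro m hm i
    obtain ⟨q, hq⟩ := (hd i).1
    have := canon_lb A ℓ hm q i
    rw [hq] at this
    exact sub_le_comm.mp this
  constructor
  · rintro ⟨hlam, hmin⟩ i
    have hle : lam = fun i => ℓ i - d i :=
      le_antisymm (hmin _ hμcanon) (hμmin lam hlam)
    have : ℓ i - lam i = d i := by rw [hle]; simp
    rw [this]
    exact hd i
  · intro h
    have hlamμ : lam = fun i => ℓ i - d i := by
      funext i
      have h1 : ℓ i - lam i = d i := (h i).unique (hd i)
      have h2 : lam i = ℓ i - (ℓ i - lam i) := (sub_sub_cancel _ _).symm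
      rw [h2, h1]
    exact ⟨hlamμ ▸ hμcanon, fun m hm => hlamμ ▸ hμmin m hm⟩
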